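/- Let K ≥ 2 be a natural number and let g, ρ : Fin K → ℕ be monotone nondecreasing (sorted) vectors. If ξ(g) = ξ(ρ), i.e., ∑_{k} K^{−g(k)} = ∑_{k} K^{−ρ(k)}, then g = ρ. In other words, ξ is injective on sorted vectors in ℕ^K. -/

import Mathlib

/-- The separable objective `ξ(v) = ∑ k, K^{-v k}`. -/
noncomputable def xi (K : ℕ) (v : Fin K → ℕ) : ℝ :=
  ∑ k : Fin K, ((K : ℝ))⁻¹ ^ v k

lemma xi_strict (K : ℕ) (hK : 2 ≤ K) (g ρ : Fin K → ℕ)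
    (hρ : Monotone ρ) (j : Fin K)
    (hlt : g j < ρ j) (hpre : ∀ k, k < j → g k = ρ k) :
    xi K ρ < xi K g := by
  set r : ℝ := ((K : ℝ))⁻¹ with hr
  have hKpos : (0:ℝ) < K := by
    have : 0 < K := by omega
    exact_mod_cast this
  have hr0 : 0 < r := by positivity
  have hr1 : r < 1 := by
    rw [hr, inv_lt_one_iff₀]
    right
    exact_mod_cast by omega
  have hKr : (K : ℝ) * r = 1 := mul_inv_cancel₀ (ne_of_gt hKpos)
  unfold xi
  rw [← Finset.sum_filter_add_sum_filter_not Finset.univ (fun k => k < j),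
      ← Finset.sum_filter_add_sum_filter_not Finset.univ (fun k => k < j)]
  have hpref : ∑ k ∈ Finset.univ.filter (fun k => k < j), r ^ ρ k
      = ∑ k ∈ Finset.univ.filter (fun k => k < j), r ^ g k := by
    refine Finset.sum_congr rfl fun k hk => ?_
    rw [hpre k (by simpa using hk)]
  rw [hpref]
  refine (add_lt_add_iff_left _).mpr ?_
  set S := Finset.univ.filter (fun k => ¬ k < j) with hS
  have hjS : j ∈ S := by simp [hS]
  by_cases hex : ∃ m ∈ S, m ≠ j
  · -- upper bound for ρ side
    obtain ⟨m, hmS, hmj⟩ := hex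
    have hub : ∑ k ∈ S, r ^ ρ k ≤ r ^ g j := by
      calc ∑ k ∈ S, r ^ ρ k ≤ ∑ k ∈ S, r ^ (g j + 1) := by
            refine Finset.sum_le_sum fun k hk => ?_
            have hk' : j ≤ k := le_of_not_gt (by simpa [hS] using hk)
            have : g j + 1 ≤ ρ k := le_trans hlt (hρ hk')
            exact pow_le_pow_of_le_one hr0.le hr1.le this
        _ ≤ ∑ _k ∈ (Finset.univ : Finset (Fin K)), r ^ (g j + 1) := by
            refine Finset.sum_le_sum_of_subset_of_nonneg (Finset.subset_univ S)
              fun _ _ _ => by positivity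
        _ = (K : ℝ) * (r * r ^ g j) := by
            rw [Finset.sum_const, Finset.card_univ, Fintype.card_fin, nsmul_eq_mul,
              pow_succ, mul_comm (r ^ g j) r]
        _ = r ^ g j := by rw [← mul_assoc, hKr, one_mul]
    have hlb : r ^ g j < ∑ k ∈ S, r ^ g k := by
      have hpair : r ^ g j + r ^ g m = ∑ k ∈ ({j, m} : Finset (Fin K)), r ^ g k := by
        rw [Finset.sum_pair (Ne.symm hmj)]
      have hsub : ({j, m} : Finset (Fin K)) ⊆ S := by
        intro x hx
        rcases Finset.mem_insert.mp hx with h | h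
        · exact h ▸ hjS
        · exact (Finset.mem_singleton.mp h) ▸ hmS
      calc r ^ g j < r ^ g j + r ^ g m := lt_add_of_pos_right _ (by positivity)
        _ = ∑ k ∈ ({j, m} : Finset (Fin K)), r ^ g k := hpair
        _ ≤ ∑ k ∈ S, r ^ g k :=
            Finset.sum_le_sum_of_subset_of_nonneg hsub fun _ _ _ => by positivity
    exact lt_of_le_of_lt hub hlb
  · have hSj : S = {j} := by
      ext x
      simp only [Finset.mem_singleton]
      constructor
      · intro hx
        by_contra hxj
        exact hex ⟨x, hx, hxj⟩
      · rintro rfl; exact hjS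
    rw [hSj, Finset.sum_singleton, Finset.sum_singleton]
    exact pow_lt_pow_right_of_lt_one₀ hr0 hr1 hlt

/-- `ξ` is injective on sorted vectors in `ℕ^K`. -/
theorem stmt_3 (K : ℕ) (hK : 2 ≤ K) (g ρ : Fin K → ℕ)
    (hg : Monotone g) (hρ : Monotone ρ)
    (heq : xi K g = xi K ρ) :
    g = ρ := by
  by_contra hne
  have hT : (Finset.univ.filter (fun k => g k ≠ ρ k)).Nonempty := by
    obtain ⟨k, hk⟩ := Function.ne_iff.mp hne
    exact ⟨k, by simpa using hk⟩
  set j := (Finset.univ.filter (fun k => g k ≠ ρ k)).min' hT with hj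
  have hjmem := (Finset.univ.filter (fun k => g k ≠ ρ k)).min'_mem hT
  have hjne : g j ≠ ρ j := by simpa using hjmem
  have hpre : ∀ k, k < j → g k = ρ k := by
    intro k hk
    by_contra h
    have := Finset.min'_le (Finset.univ.filter (fun k => g k ≠ ρ k)) k (by simpa using h)
    exact absurd (lt_of_lt_of_le hk this) (lt_irrefl k)
  rcases lt_or_gt_of_ne hjne with h | h
  · exact absurd heq (ne_of_gt (xi_strict K hK g ρ hρ j h hpre))
  · exact absurd heq (ne_of_lt (xi_strict K hK ρ g hg j h fun k hk => (hpre k hk).symm))
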